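/- Let R be a UFD, S a multiplicatively closed set of R generated by units and a set U of prime elements of R. Then the localization S⁻¹R is a UFD, and the prime elements of S⁻¹R are exactly the associates (in S⁻¹R) of those primes of R that are not associate to any element of U. -/

import Mathlib

/-- If `R` is a UFD and `S` is the multiplicative set generated by the units of
`R` together with a set `U` of prime elements, then `S⁻¹R` is a UFD, and its primes are
exactly the associates (in `S⁻¹R`) of the primes of `R` not associate to any element of `U`. -/
theorem stmt19 (R : Type*) [CommRing R] [IsDomain R] [UniqueFactorizationMonoid R]
    (U : Set R) (hU : ∀ q ∈ U, Prime q) :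
    ∃ hD : IsDomain (Localization (Submonoid.closure (U ∪ {u : R | IsUnit u}))),
      UniqueFactorizationMonoid (Localization (Submonoid.closure (U ∪ {u : R | IsUnit u}))) ∧
      ∀ a : Localization (Submonoid.closure (U ∪ {u : R | IsUnit u})),
        Prime a ↔ ∃ q : R, Prime q ∧ (∀ u ∈ U, ¬ Associated q u) ∧
          Associated (algebraMap R (Localization (Submonoid.closure (U ∪ {u : R | IsUnit u}))) q)
            a := by
  classical
  set S := Submonoid.closure (U ∪ {u : R | IsUnit u}) with hSdef
  have hSle : S ≤ nonZeroDivisors R := by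
    rw [hSdef, Submonoid.closure_le]
    rintro x (hx | hx)
    · exact mem_nonZeroDivisors_of_ne_zero (hU x hx).ne_zero
    · exact mem_nonZeroDivisors_of_ne_zero hx.ne_zero
  haveI hD : IsDomain (Localization S) := IsLocalization.isDomain_localization hSle
  set f := algebraMap R (Localization S) with hfdef
  have hinj : Function.Injective f := IsLocalization.injective (Localization S) hSle
  -- primes not associated to U don't divide elements of S
  have hndvd : ∀ q : R, Prime q → (∀ u ∈ U, ¬Associated q u) → ∀ s ∈ S, ¬ q ∣ s := by
    intro q hq hqU s hs
    induction hs using Submonoid.closure_induction with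
    | mem x hx =>
      rcases hx with hx | hx
      · exact fun hd => hqU x hx (hq.associated_of_dvd (hU x hx) hd)
      · exact fun hd => hq.not_unit (isUnit_of_dvd_unit hd hx)
    | one => exact fun hd => hq.not_unit (isUnit_of_dvd_one hd)
    | mul a b _ _ ha hb => exact fun hd => (hq.dvd_mul.mp hd).elim ha hb
  -- images of such primes are prime
  have hprime : ∀ q : R, Prime q → (∀ u ∈ U, ¬Associated q u) → Prime (f q) := by
    intro q hq hqU
    have hq0 : f q ≠ 0 := fun h => hq.ne_zero (hinj (by simpa using h))
    rw [← Ideal.span_singleton_prime hq0]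
    have hmap : Ideal.map f (Ideal.span {q}) = Ideal.span {f q} := by
      rw [Ideal.map_span]; simp
    rw [← hmap]
    refine IsLocalization.isPrime_of_isPrime_disjoint S (Localization S) _
      ((Ideal.span_singleton_prime hq.ne_zero).mpr hq) ?_
    rw [Set.disjoint_left]
    intro s hsS hsI
    exact hndvd q hq hqU s hsS (Ideal.mem_span_singleton.mp hsI)
  -- factorization of nonzero elements of the localization
  have hfac : ∀ x : Localization S, x ≠ 0 → ∃ F : Multiset R,
      (∀ p ∈ F, Prime p ∧ ∀ u ∈ U, ¬Associated p u) ∧ Associated ((F.map f).prod) x := by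
    intro x hx
    obtain ⟨⟨r, s⟩, hrs⟩ := IsLocalization.surj S x
    have hsu : IsUnit (f s) := IsLocalization.map_units _ s
    have hxr : Associated x (f r) := ⟨hsu.unit, by simpa using hrs⟩
    have hr0 : r ≠ 0 := by
      intro h
      rw [h, map_zero] at hxr
      exact hx ((associated_zero_iff_eq_zero x).mp hxr)
    obtain ⟨F, hF, hFr⟩ := UniqueFactorizationMonoid.exists_prime_factors r hr0
    set F₁ := F.filter (fun p => ∀ u ∈ U, ¬Associated p u) with hF₁
    set F₂ := F.filter (fun p => ¬ ∀ u ∈ U, ¬Associated p u) with hF₂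
    have hsplit : F₁ + F₂ = F := Multiset.filter_add_not _ F
    have hu2 : IsUnit ((F₂.map f).prod) := by
      refine Multiset.prod_induction IsUnit _ (fun a b ha hb => ha.mul hb) isUnit_one ?_
      intro a ha
      obtain ⟨p, hp, rfl⟩ := Multiset.mem_map.mp ha
      obtain ⟨u, huU, hpu⟩ := by
        have := (Multiset.mem_filter.mp hp).2
        push_neg at this
        exact this
      have hfu : IsUnit (f u) := IsLocalization.map_units (Localization S)
        ⟨u, Submonoid.subset_closure (show u ∈ U ∪ {u : R | IsUnit u} from Or.inl huU)⟩
      exact (hpu.map f).symm.isUnit hfu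
    refine ⟨F₁, fun p hp => ⟨hF p (Multiset.mem_filter.mp hp).1, (Multiset.mem_filter.mp hp).2⟩, ?_⟩
    have h1 : (F₁.map f).prod * (F₂.map f).prod = ((F.map f)).prod := by
      rw [← Multiset.prod_add, ← Multiset.map_add, hsplit]
    have h2 : Associated ((F₁.map f).prod) ((F.map f).prod) := by
      rw [← h1]; exact associated_mul_unit_right _ _ hu2
    have h3 : Associated ((F.map f).prod) x := by
      rw [← map_multiset_prod]
      exact (hFr.map f).trans hxr.symm
    exact h2.trans h3
  haveI hUFM : UniqueFactorizationMonoid (Localization S) := by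
    refine UniqueFactorizationMonoid.of_exists_prime_factors ?_
    intro x hx
    obtain ⟨F, hF, hFx⟩ := hfac x hx
    refine ⟨F.map f, ?_, hFx⟩
    intro b hb
    obtain ⟨p, hp, rfl⟩ := Multiset.mem_map.mp hb
    exact hprime p (hF p hp).1 (hF p hp).2
  refine ⟨hD, hUFM, fun a => ⟨?_, ?_⟩⟩
  · intro ha
    obtain ⟨F, hF, hFa⟩ := hfac a ha.ne_zero
    obtain ⟨b, hb, hab⟩ := ha.exists_mem_multiset_dvd hFa.symm.dvd
    obtain ⟨p, hp, rfl⟩ := Multiset.mem_map.mp hb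
    exact ⟨p, (hF p hp).1, (hF p hp).2,
      (ha.associated_of_dvd (hprime p (hF p hp).1 (hF p hp).2) hab).symm⟩
  · rintro ⟨q, hq, hqU, hassoc⟩
    exact hassoc.prime (hprime q hq hqU)
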